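/- Let n ≥ 1 and let κ ∈ ℝ^n satisfy σ_i(κ) > 0 for all 1 ≤ i ≤ l, where 1 ≤ l ≤ n. Then for any integers k, l with 1 ≤ k < l ≤ n, the normalized elementary symmetric functions satisfy the Newton–MacLaurin inequality H_{k-1}(κ)·H_l(κ) ≤ H_k(κ)·H_{l-1}(κ). -/

import Mathlib

open Finset

/-- The `r`-th elementary symmetric polynomial of `κ = (κ_1, …, κ_n)`. -/
noncomputable def esymm (n : ℕ) (κ : Fin n → ℝ) (r : ℕ) : ℝ :=
  ∑ s ∈ powersetCard r (univ : Finset (Fin n)), ∏ i ∈ s, κ i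

/-- The normalized `r`-th mean curvature `H_r(κ) = σ_r(κ) / C(n,r)`. -/
noncomputable def Hmc (n : ℕ) (κ : Fin n → ℝ) (r : ℕ) : ℝ :=
  esymm n κ r / (n.choose r)

namespace NewtonAux

open Polynomial

/-- normalized mean of a multiset -/
noncomputable def Hms (s : Multiset ℝ) (j : ℕ) : ℝ :=
  s.esymm j / ((Multiset.card s).choose j)

lemma bridge (n : ℕ) (κ : Fin n → ℝ) (r : ℕ) :
    (Multiset.map κ (univ : Finset (Fin n)).val).esymm r = esymm n κ r := by
  rw [show Multiset.map κ (univ : Finset (Fin n)).val = (univ : Finset (Fin n)).val.map κ from rfl,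
    Finset.esymm_map_val]
  rfl

lemma deriv_step (s : Multiset ℝ) (n : ℕ) (hn : Multiset.card s = n) (h1 : 1 ≤ n) :
    ∃ t : Multiset ℝ, Multiset.card t = n - 1 ∧
      ∀ j ≤ n - 1, (n : ℝ) * t.esymm j = ((n - j : ℕ) : ℝ) * s.esymm j := by
  set p := (s.map fun a => X - C a).prod with hp
  have hmonic : p.Monic := monic_multiset_prod_of_monic _ _ fun a _ => monic_X_sub_C a
  have hdeg : p.natDegree = n := by
    rw [hp, natDegree_multiset_prod_X_sub_C_eq_card, hn]
  have hroots : p.roots = s := roots_multiset_prod_X_sub_C s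
  set q := derivative p with hq
  have hqc : q.coeff (n - 1) = (n : ℝ) := by
    rw [hq, coeff_derivative, Nat.sub_add_cancel h1]
    have : p.coeff n = 1 := by
      have := hmonic.coeff_natDegree
      rwa [hdeg] at this
    rw [this, one_mul]
    rw [Nat.cast_sub h1]
    push_cast; ring
  have hqdeg : q.natDegree = n - 1 := by
    refine le_antisymm (by rw [← hdeg] at *; exact natDegree_derivative_le p) ?_
    exact le_natDegree_of_ne_zero (by rw [hqc]; positivity)
  have hcard1 : Multiset.card p.roots ≤ Multiset.card q.roots + 1 := p.card_roots_le_derivative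
  have hcard2 : Multiset.card q.roots ≤ n - 1 := hqdeg ▸ q.card_roots'
  have hcardt : Multiset.card q.roots = n - 1 := by
    rw [hroots, hn] at hcard1; omega
  have hsplits : Splits q := splits_iff_card_roots.mpr (by rw [hcardt, hqdeg])
  have hfact : q = C q.leadingCoeff * (q.roots.map fun a => X - C a).prod :=
    hsplits.eq_prod_roots
  have hlead : q.leadingCoeff = (n : ℝ) := by
    rw [leadingCoeff, hqdeg, hqc]
  refine ⟨q.roots, hcardt, fun j hj => ?_⟩
  have hi : n - 1 - j ≤ n - 1 := Nat.sub_le _ _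
  have key1 : q.coeff (n - 1 - j) = p.coeff (n - 1 - j + 1) * ((n - 1 - j : ℕ) + 1 : ℝ) := by
    rw [hq, coeff_derivative]
  have key2 : p.coeff (n - 1 - j + 1) = (-1) ^ j * s.esymm j := by
    have hle : n - 1 - j + 1 ≤ Multiset.card s := by omega
    have := Multiset.prod_X_sub_C_coeff s hle
    rw [← hp] at this
    rw [this, hn]
    congr 2 <;> omega
  have key3 : q.coeff (n - 1 - j) = (n : ℝ) * ((-1) ^ j * q.roots.esymm j) := by
    conv_lhs => rw [hfact]
    rw [coeff_C_mul, hlead]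
    have hle : n - 1 - j ≤ Multiset.card q.roots := by omega
    rw [Multiset.prod_X_sub_C_coeff q.roots hle, hcardt]
    congr 3 <;> omega
  have hcast : ((n - 1 - j : ℕ) + 1 : ℝ) = ((n - j : ℕ) : ℝ) :=
    mod_cast congrArg (Nat.cast : ℕ → ℝ) (by omega : n - 1 - j + 1 = n - j)
  have heq : (n : ℝ) * ((-1) ^ j * q.roots.esymm j)
      = ((-1) ^ j * s.esymm j) * ((n - j : ℕ) : ℝ) := by
    rw [← key3, key1, key2, hcast]
  have hne : ((-1 : ℝ) ^ j) ≠ 0 := pow_ne_zero _ (by norm_num)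
  apply mul_left_cancel₀ hne
  linear_combination heq

lemma reduce (n : ℕ) : ∀ (s : Multiset ℝ), Multiset.card s = n → ∀ m ≤ n,
    ∃ t : Multiset ℝ, Multiset.card t = m ∧
      ∀ j ≤ m, (n.choose j : ℝ) * t.esymm j = (m.choose j : ℝ) * s.esymm j := by
  induction n with
  | zero =>
    intro s hs m hm
    exact ⟨s, by omega, fun j hj => by interval_cases m <;> interval_cases j <;> simp⟩
  | succ n ih =>
    intro s hs m hm
    rcases eq_or_lt_of_le hm with h | h
    · exact ⟨s, by omega, fun j hj => by rw [h]⟩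
    · have hm' : m ≤ n := by omega
      obtain ⟨t₁, ht₁, hrel₁⟩ := deriv_step s (n + 1) hs (by omega)
      simp only [Nat.add_sub_cancel] at ht₁ hrel₁
      obtain ⟨t, ht, hrel⟩ := ih t₁ ht₁ m hm'
      refine ⟨t, ht, fun j hj => ?_⟩
      have hjn : j ≤ n := le_trans hj hm'
      have hd := hrel₁ j hjn
      have hi := hrel j hj
      have hcN : (n + 1 - j) * ((n + 1).choose j) = (n + 1) * n.choose j :=
        calc (n + 1 - j) * ((n + 1).choose j) = (n + 1).choose j * (n + 1 - j) :=
              Nat.mul_comm _ _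
          _ = (n + 1).choose (j + 1) * (j + 1) := (Nat.choose_succ_right_eq (n + 1) j).symm
          _ = (n + 1) * n.choose j := (Nat.add_one_mul_choose_eq n j).symm
      have hc : ((n + 1 - j : ℕ) : ℝ) * (((n + 1).choose j : ℕ) : ℝ)
          = ((n + 1 : ℕ) : ℝ) * ((n.choose j : ℕ) : ℝ) := by exact_mod_cast congrArg Nat.cast hcN
      have hCn : ((n.choose j : ℕ) : ℝ) ≠ 0 := by
        have := Nat.choose_pos hjn; positivity
      have hn1 : ((n + 1 : ℕ) : ℝ) ≠ 0 := by positivity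
      apply mul_left_cancel₀ hn1
      apply mul_left_cancel₀ hCn
      push_cast at hd hi hc ⊢
      linear_combination (((n : ℝ) + 1) * (((n + 1).choose j : ℕ) : ℝ)) * hi
        + (((m.choose j : ℕ) : ℝ) * (((n + 1).choose j : ℕ) : ℝ)) * hd
        + (((m.choose j : ℕ) : ℝ) * s.esymm j) * hc

lemma esymm_two_elem (a b : ℝ) :
    ({a, b} : Multiset ℝ).esymm 1 = a + b ∧ ({a, b} : Multiset ℝ).esymm 2 = a * b := by
  constructor
  · simp [Multiset.esymm, Multiset.powersetCard_one]
    ring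
  · have h : ({a, b} : Multiset ℝ).powersetCard 2 = {({a, b} : Multiset ℝ)} := by
      rw [show ({a, b} : Multiset ℝ) = a ::ₘ b ::ₘ 0 from rfl]
      simp [Multiset.powersetCard_cons, Multiset.powersetCard_one]
    simp only [Multiset.esymm, h]
    simp

lemma newton_one (s : Multiset ℝ) (h2 : 2 ≤ Multiset.card s) :
    s.esymm 2 * ((Multiset.card s : ℕ) : ℝ) ^ 2
      ≤ s.esymm 1 ^ 2 * (((Multiset.card s).choose 2 : ℕ) : ℝ) := by
  set n := Multiset.card s with hn
  obtain ⟨t, ht, hrel⟩ := reduce n s rfl 2 h2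
  obtain ⟨a, b, hab⟩ := Multiset.card_eq_two.mp ht
  obtain ⟨he1, he2⟩ := esymm_two_elem a b
  have h1 := hrel 1 (by omega)
  have h2' := hrel 2 (by omega)
  rw [hab, he1] at h1
  rw [hab, he2] at h2'
  simp only [Nat.choose_one_right, Nat.choose_self] at h1 h2'
  have hs2 : s.esymm 2 = ((n.choose 2 : ℕ) : ℝ) * (a * b) := by
    push_cast at h2'; linarith
  have hs1 : s.esymm 1 ^ 2 = ((n : ℝ) * (a + b)) ^ 2 / 4 := by
    rw [h1]; push_cast; ring
  rw [hs2, hs1]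
  nlinarith [mul_nonneg (by positivity : (0:ℝ) ≤ ((n.choose 2 : ℕ) : ℝ))
    (sq_nonneg ((n : ℝ) * (a - b)))]

lemma esymm_zero' (n : ℕ) (f : Fin n → ℝ) : esymm n f 0 = 1 := by
  simp [esymm]

lemma inv_identity (m : ℕ) (f : Fin m → ℝ) (hf : ∀ i, f i ≠ 0) (j : ℕ) (hj : j ≤ m) :
    esymm m f j = (∏ i, f i) * esymm m (fun i => (f i)⁻¹) (m - j) := by
  unfold esymm
  rw [Finset.mul_sum]
  refine Finset.sum_nbij' (fun t => univ \ t) (fun t => univ \ t) ?_ ?_ ?_ ?_ ?_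
  · intro t ht
    rw [mem_powersetCard_univ] at ht ⊢
    rw [Finset.card_sdiff_of_subset (Finset.subset_univ t), Finset.card_univ, Fintype.card_fin, ht]
  · intro t ht
    rw [mem_powersetCard_univ] at ht ⊢
    rw [Finset.card_sdiff_of_subset (Finset.subset_univ t), Finset.card_univ, Fintype.card_fin, ht]
    omega
  · intro t _
    simp
  · intro t _
    simp
  · intro t ht
    have hsub : t ⊆ univ := Finset.subset_univ t
    have hsplit : (∏ i ∈ univ \ t, f i) * ∏ i ∈ t, f i = ∏ i, f i :=
      Finset.prod_sdiff hsub
    have hne : (∏ i ∈ univ \ t, f i) ≠ 0 :=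
      Finset.prod_ne_zero_iff.mpr fun i _ => hf i
    rw [Finset.prod_inv_distrib, ← hsplit, mul_comm (∏ i ∈ univ \ t, f i) (∏ i ∈ t, f i),
      mul_assoc, mul_inv_cancel₀ hne, mul_one]

lemma esymm_eq_prod_of_card (s : Multiset ℝ) :
    s.esymm (Multiset.card s) = s.prod := by
  have h : s.powersetCard (Multiset.card s) = {s} := by
    symm
    apply Multiset.eq_of_le_of_card_le
    · rw [Multiset.singleton_le, Multiset.mem_powersetCard]
      exact ⟨le_refl s, rfl⟩
    · rw [Multiset.card_powersetCard, Nat.choose_self, Multiset.card_singleton]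
  simp [Multiset.esymm, h]

lemma newton_top (r : ℕ) (hr : 1 ≤ r) (s : Multiset ℝ) (hcard : Multiset.card s = r + 1) :
    Hms s (r - 1) * Hms s (r + 1) ≤ Hms s r * Hms s r := by
  by_cases h0 : (0 : ℝ) ∈ s
  · have hz : s.esymm (r + 1) = 0 := by
      rw [← hcard, esymm_eq_prod_of_card]
      exact Multiset.prod_eq_zero h0
    have : Hms s (r + 1) = 0 := by rw [Hms, hz, zero_div]
    rw [this, mul_zero]
    exact mul_self_nonneg _
  · -- represent s as a list
    set L := s.toList with hLdef
    have hL : (L : Multiset ℝ) = s := s.coe_toList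
    have hlen : L.length = r + 1 := by
      rw [← hcard, ← hL]; simp
    set m := L.length with hm
    set f : Fin m → ℝ := L.get with hfdef
    have hmap : Multiset.map f (univ : Finset (Fin m)).val = s := by
      rw [show Multiset.map f (univ : Finset (Fin m)).val = ((List.ofFn f : List ℝ) : Multiset ℝ)
        from Fin.univ_val_map f]
      rw [hfdef, List.ofFn_get]
      exact hL
    have hes : ∀ j, s.esymm j = esymm m f j := fun j => by rw [← hmap, bridge]
    have hfne : ∀ i, f i ≠ 0 := by
      intro i hzero
      have hmem : f i ∈ L := L.get_mem i
      rw [hzero] at hmem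
      exact h0 (by rw [← hL]; exact Multiset.mem_coe.mpr hmem)
    set g : Fin m → ℝ := fun i => (f i)⁻¹ with hg
    set P : ℝ := ∏ i, f i with hP
    have e1 : esymm m f (r + 1) = P * esymm m g 0 := by
      have := inv_identity m f hfne (r + 1) (by omega)
      rwa [show m - (r + 1) = 0 by omega] at this
    have e2 : esymm m f r = P * esymm m g 1 := by
      have := inv_identity m f hfne r (by omega)
      rwa [show m - r = 1 by omega] at this
    have e3 : esymm m f (r - 1) = P * esymm m g 2 := by
      have := inv_identity m f hfne (r - 1) (by omega)
      rwa [show m - (r - 1) = 2 by omega] at this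
    -- Newton's basic inequality for g
    have hbridge_g : (Multiset.map g (univ : Finset (Fin m)).val).esymm = fun j => esymm m g j :=
      funext fun j => bridge m g j
    set u := Multiset.map g (univ : Finset (Fin m)).val with hu
    have hcardu : Multiset.card u = m := by simp [hu]
    have hN := newton_one u (by omega)
    rw [hcardu, bridge, bridge] at hN
    -- assemble
    unfold Hms
    rw [hcard, hes, hes, hes, e1, e2, e3, esymm_zero']
    rw [show (r + 1).choose (r + 1) = 1 from Nat.choose_self _]
    rw [show (r + 1).choose r = r + 1 by
      rw [← Nat.choose_symm (by omega : r ≤ r + 1)]; simp]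
    rw [show (r + 1).choose (r - 1) = (r + 1).choose 2 by
      have h := Nat.choose_symm (show 2 ≤ r + 1 by omega)
      rw [show r + 1 - 2 = r - 1 by omega] at h
      exact h]
    have hc1 : ((m : ℕ) : ℝ) = (((r + 1 : ℕ) : ℕ) : ℝ) := by exact_mod_cast hlen
    have hc2 : ((m.choose 2 : ℕ) : ℝ) = (((r + 1).choose 2 : ℕ) : ℝ) := by rw [hlen]
    rw [hc1, hc2] at hN
    have hCpos : (0 : ℝ) < (((r + 1).choose 2 : ℕ) : ℝ) := by
      have := Nat.choose_pos (by omega : 2 ≤ r + 1); positivity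
    have hrpos : (0 : ℝ) < ((r + 1 : ℕ) : ℝ) := by positivity
    rw [div_mul_div_comm, div_mul_div_comm,
      div_le_div_iff₀ (mul_pos hCpos (by norm_num)) (mul_pos hrpos hrpos)]
    push_cast at hN ⊢
    nlinarith [mul_le_mul_of_nonneg_left hN (sq_nonneg P)]

lemma newton_Hms (s : Multiset ℝ) (r : ℕ) (hr : 1 ≤ r) (h : r + 1 ≤ Multiset.card s) :
    Hms s (r - 1) * Hms s (r + 1) ≤ Hms s r * Hms s r := by
  obtain ⟨t, ht, hrel⟩ := reduce (Multiset.card s) s rfl (r + 1) h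
  have hH : ∀ j ≤ r + 1, Hms s j = Hms t j := by
    intro j hj
    unfold Hms
    rw [ht]
    have h1 : (0 : ℝ) < (((Multiset.card s).choose j : ℕ) : ℝ) := by
      have := Nat.choose_pos (le_trans hj h); positivity
    have h2 : (0 : ℝ) < (((r + 1).choose j : ℕ) : ℝ) := by
      have := Nat.choose_pos hj; positivity
    rw [div_eq_div_iff h1.ne' h2.ne']
    linarith [hrel j hj]
  rw [hH (r - 1) (by omega), hH (r + 1) (by omega), hH r (by omega)]
  exact newton_top r hr t ht

end NewtonAux


open NewtonAux in
/-- Newton–MacLaurin inequality: if `κ ∈ Γ_l⁺` (i.e. `σ_i(κ) > 0` for `1 ≤ i ≤ l`),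
then for `1 ≤ k < l ≤ n` one has `H_{k-1}·H_l ≤ H_k·H_{l-1}`. -/
theorem newton_maclaurin (n l k : ℕ) (hn : 1 ≤ n) (hl : l ≤ n)
    (hk : 1 ≤ k) (hkl : k < l)
    (κ : Fin n → ℝ) (hκ : ∀ i, 1 ≤ i → i ≤ l → 0 < esymm n κ i) :
    Hmc n κ (k - 1) * Hmc n κ l ≤ Hmc n κ k * Hmc n κ (l - 1) := by
  set s : Multiset ℝ := Multiset.map κ (univ : Finset (Fin n)).val with hs
  have hcards : Multiset.card s = n := by simp [hs]
  have hbr : ∀ j, Hmc n κ j = Hms s j := by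
    intro j
    rw [Hmc, Hms, hcards, hs, bridge]
  -- Newton's inequalities in Hmc form
  have hnewton : ∀ r, 1 ≤ r → r + 1 ≤ n →
      Hmc n κ (r - 1) * Hmc n κ (r + 1) ≤ Hmc n κ r * Hmc n κ r := by
    intro r h1 h2
    rw [hbr, hbr, hbr]
    exact newton_Hms s r h1 (by omega)
  -- positivity
  have hpos : ∀ i, i ≤ l → 0 < Hmc n κ i := by
    intro i hi
    rcases Nat.eq_zero_or_pos i with h | h
    · subst h
      have : esymm n κ 0 = 1 := esymm_zero' n κ
      rw [Hmc, this, Nat.choose_zero_right]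
      norm_num
    · have h1 := hκ i h hi
      have h2 : (0 : ℝ) < ((n.choose i : ℕ) : ℝ) := by
        have := Nat.choose_pos (le_trans hi hl); positivity
      rw [Hmc]
      positivity
  -- chaining
  have chain : ∀ r, k ≤ r → r ≤ l →
      Hmc n κ (k - 1) * Hmc n κ r ≤ Hmc n κ k * Hmc n κ (r - 1) := by
    intro r hr
    induction r, hr using Nat.le_induction with
    | base =>
      intro _
      rw [mul_comm]
    | succ r hkr ih =>
      intro hrl
      have ih' := ih (by omega)
      have hN := hnewton r (by omega) (by omega)
      have hp0 : 0 < Hmc n κ (r - 1) := hpos (r - 1) (by omega)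
      have hp1 : 0 < Hmc n κ r := hpos r (by omega)
      have hp2 : 0 < Hmc n κ (k - 1) := hpos (k - 1) (by omega)
      rw [show r + 1 - 1 = r by omega]
      nlinarith [mul_le_mul_of_nonneg_left hN (le_of_lt hp2),
        mul_le_mul_of_nonneg_left ih' (le_of_lt hp1)]
  exact chain l (le_of_lt hkl) le_rfl
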